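/- Let U be a unitary on ℂ² and let |ψ_AB⟩ = C₁|η₁⟩⊗|χ₁⟩ + C₂|η₂⟩⊗|χ₂⟩ be any unit vector in ℂ² ⊗ ℂ^{d'} written in Schmidt form (η₁ ⊥ η₂, χ₁ ⊥ χ₂, |C₁|² + |C₂|² = 1). Then |⟨ψ_AB|(U ⊗ I)|ψ_AB⟩|² ≥ |Tr(U)|²/4. -/

import Mathlib

open Matrix Kronecker Complex

private lemma key_ineq (a b : ℂ) (t : ℝ) (ht0 : 0 ≤ t) (ht1 : t ≤ 1)
    (hab : ‖a‖ = ‖b‖) :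
    (‖a + b‖) ^ 2 / 4 ≤ (‖(t : ℂ) * a + ((1 - t : ℝ) : ℂ) * b‖) ^ 2 := by
  have h1 : ‖a‖ ^ 2 = a.re ^ 2 + a.im ^ 2 := by
    rw [Complex.sq_norm, Complex.normSq_apply]; ring
  have h2 : ‖b‖ ^ 2 = b.re ^ 2 + b.im ^ 2 := by
    rw [Complex.sq_norm, Complex.normSq_apply]; ring
  have hn : a.re ^ 2 + a.im ^ 2 = b.re ^ 2 + b.im ^ 2 := by rw [← h1, ← h2, hab]
  have e1 : (‖a + b‖) ^ 2 = (a.re + b.re) ^ 2 + (a.im + b.im) ^ 2 := by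
    rw [Complex.sq_norm, Complex.normSq_apply]; simp; ring
  have e2 : (‖(t : ℂ) * a + ((1 - t : ℝ) : ℂ) * b‖) ^ 2
      = (t * a.re + (1 - t) * b.re) ^ 2 + (t * a.im + (1 - t) * b.im) ^ 2 := by
    rw [Complex.sq_norm, Complex.normSq_apply]; simp; ring
  rw [e1, e2]
  nlinarith [sq_nonneg (a.re - b.re), sq_nonneg (a.im - b.im), sq_nonneg (2 * t - 1),
    sq_nonneg ((2 * t - 1) * (a.re - b.re)), sq_nonneg ((2 * t - 1) * (a.im - b.im))]

private lemma prod_overlap (d' : ℕ) (U : Matrix (Fin 2) (Fin 2) ℂ)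
    (e e' : Fin 2 → ℂ) (f f' : Fin d' → ℂ) :
    star (fun p : Fin 2 × Fin d' => e p.1 * f p.2) ⬝ᵥ
      ((U ⊗ₖ (1 : Matrix (Fin d') (Fin d') ℂ)).mulVec (fun p => e' p.1 * f' p.2))
    = (star e ⬝ᵥ U.mulVec e') * (star f ⬝ᵥ f') := by
  simp only [dotProduct, mulVec, Fintype.sum_prod_type, kroneckerMap_apply, Matrix.one_apply,
    mul_ite, mul_one, mul_zero, ite_mul, zero_mul, Finset.sum_ite_eq, Finset.sum_ite_eq',
    Finset.mem_univ, if_true, Pi.star_apply, star_mul']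
  rw [Finset.sum_mul_sum]
  refine Finset.sum_congr rfl fun i _ => Finset.sum_congr rfl fun k _ => ?_
  have h : (∑ j, U i j * (e' j * f' k)) = (∑ j, U i j * e' j) * f' k := by
    rw [Finset.sum_mul]; exact Finset.sum_congr rfl fun j _ => by ring
  rw [h]; ring

theorem entangled_probe_overlap_lower_bound (d' : ℕ)
    (U : Matrix (Fin 2) (Fin 2) ℂ) (hU : U ∈ Matrix.unitaryGroup (Fin 2) ℂ)
    (η : Fin 2 → Fin 2 → ℂ) (χ : Fin 2 → Fin d' → ℂ) (C : Fin 2 → ℂ)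
    (hη : ∀ i j, star (η i) ⬝ᵥ η j = if i = j then 1 else 0)
    (hχ : ∀ i j, star (χ i) ⬝ᵥ χ j = if i = j then 1 else 0)
    (hC : ∑ w, ‖C w‖ ^ 2 = 1) :
    let ψ : Fin 2 × Fin d' → ℂ := fun p => ∑ w, C w * η w p.1 * χ w p.2
    ‖U.trace‖ ^ 2 / 4 ≤
      ‖star ψ ⬝ᵥ ((U ⊗ₖ (1 : Matrix (Fin d') (Fin d') ℂ)).mulVec ψ)‖ ^ 2 := by
  intro ψ
  -- the matrix M whose columns are the η's
  set M : Matrix (Fin 2) (Fin 2) ℂ := Matrix.of fun i j => η j i with hM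
  have hMunit : M ∈ Matrix.unitaryGroup (Fin 2) ℂ := by
    rw [Matrix.mem_unitaryGroup_iff']
    ext i j
    simpa [Matrix.mul_apply, Matrix.conjTranspose_apply, hM, dotProduct,
      Matrix.one_apply] using hη i j
  set V : Matrix (Fin 2) (Fin 2) ℂ := Mᴴ * U * M with hV
  have hVunit : V ∈ Matrix.unitaryGroup (Fin 2) ℂ := by
    have h1 : Mᴴ ∈ Matrix.unitaryGroup (Fin 2) ℂ := by
      exact Unitary.star_mem hMunit
    exact Submonoid.mul_mem _ (Submonoid.mul_mem _ h1 hU) hMunit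
  -- diagonal entries of V are the overlaps
  have hVA : ∀ v w : Fin 2, V v w = star (η v) ⬝ᵥ U.mulVec (η w) := by
    intro v w
    simp only [hV, Matrix.mul_apply, Matrix.conjTranspose_apply, hM, Matrix.of_apply,
      dotProduct, mulVec, Pi.star_apply, Finset.sum_mul, Finset.mul_sum]
    rw [Finset.sum_comm]
    exact Finset.sum_congr rfl fun i _ => Finset.sum_congr rfl fun j _ => by ring
  -- trace
  have htr : V.trace = U.trace := by
    have hMM : M * Mᴴ = 1 := Matrix.mem_unitaryGroup_iff.mp hMunit
    rw [hV, Matrix.trace_mul_cycle, hMM, Matrix.one_mul]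
  -- equal moduli of the diagonal entries
  have habs : ‖V 0 0‖ = ‖V 1 1‖ := by
    have h1 : Vᴴ * V = 1 := Matrix.mem_unitaryGroup_iff'.mp hVunit
    have h2 : V * Vᴴ = 1 := Matrix.mem_unitaryGroup_iff.mp hVunit
    have e1 : (Vᴴ * V) 0 0 = (1 : Matrix (Fin 2) (Fin 2) ℂ) 0 0 := by rw [h1]
    have e2 : (V * Vᴴ) 1 1 = (1 : Matrix (Fin 2) (Fin 2) ℂ) 1 1 := by rw [h2]
    simp only [Matrix.mul_apply, Matrix.conjTranspose_apply, Fin.sum_univ_two,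
      Matrix.one_apply_eq] at e1 e2
    simp only [← starRingEnd_apply] at e1 e2
    have hn : (Complex.normSq (V 0 0) : ℂ) = (Complex.normSq (V 1 1) : ℂ) := by
      rw [← Complex.mul_conj, ← Complex.mul_conj]
      linear_combination e1 - e2
    have hn' : Complex.normSq (V 0 0) = Complex.normSq (V 1 1) := by exact_mod_cast hn
    rw [Complex.norm_def, Complex.norm_def, hn']
  -- compute the overlap
  have hψ : ψ = (C 0 • fun p : Fin 2 × Fin d' => η 0 p.1 * χ 0 p.2)
      + (C 1 • fun p : Fin 2 × Fin d' => η 1 p.1 * χ 1 p.2) := by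
    funext p
    simp only [ψ, Fin.sum_univ_two, Pi.add_apply, Pi.smul_apply, smul_eq_mul, mul_assoc]
  have hcc : ∀ w, star (C w) * C w = ((‖C w‖) ^ 2 : ℝ) := by
    intro w
    rw [show (star (C w)) = (starRingEnd ℂ) (C w) from rfl, mul_comm, Complex.mul_conj,
      Complex.normSq_eq_norm_sq]
  set t : ℝ := ‖C 0‖ ^ 2 with hts
  have ht0 : 0 ≤ t := by positivity
  have hsum : t + ‖C 1‖ ^ 2 = 1 := by
    rw [hts, ← hC, Fin.sum_univ_two]
  have ht1 : t ≤ 1 := by nlinarith [sq_nonneg (‖C 1‖)]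
  have hC1 : ‖C 1‖ ^ 2 = 1 - t := by linarith
  have e0 : ((t : ℝ) : ℂ) = star (C 0) * C 0 := by rw [hcc 0]
  have e1 : ((1 - t : ℝ) : ℂ) = star (C 1) * C 1 := by rw [hcc 1, hC1]
  have hS : star ψ ⬝ᵥ ((U ⊗ₖ (1 : Matrix (Fin d') (Fin d') ℂ)).mulVec ψ)
      = (t : ℂ) * V 0 0 + ((1 - t : ℝ) : ℂ) * V 1 1 := by
    rw [hψ]
    simp only [star_add, star_smul, add_dotProduct, smul_dotProduct, Matrix.mulVec_add,
      Matrix.mulVec_smul, dotProduct_add, dotProduct_smul, smul_eq_mul, prod_overlap, hχ,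
      Fin.reduceEq, reduceIte, mul_one, mul_zero, add_zero, zero_add, if_true, if_false]
    rw [hVA 0 0, hVA 1 1, e0, e1]
    ring
  rw [hS, ← htr, Matrix.trace_fin_two]
  exact key_ineq (V 0 0) (V 1 1) t ht0 ht1 habs
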